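/- For any c, d ∈ ℝ⟨⟨X⟩⟩, the series e := c ∘̃ ((−d) ∘ c)^{∘−1} satisfies the feedback fixed point equation e = c ∘̃ (d ∘ e); that is, the feedback product c @ d, characterized as the unique solution of that fixed point equation, equals c ∘̃ ((−d) ∘ c)^{∘−1}. -/

import Mathlib

open scoped TensorProduct

noncomputable section

namespace Paper

/-- Words over the alphabet `X = {x0, x1}`, encoded as lists over `Fin 2`
(`0` stands for the letter `x0` and `1` for the letter `x1`). -/
abbrev Word : Type := List (Fin 2)

/-- Formal power series `ℝ⟨⟨X⟩⟩`, given by their coefficient functions `η ↦ ⟨c,η⟩`. -/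
abbrev Series : Type := Word → ℝ

/-- The left shift `x_i⁻¹(c)`. -/
def lshift (i : Fin 2) (c : Series) : Series := fun w => c (i :: w)

/-- Left concatenation `x_i c` of the letter `x_i` onto every word of `c`. -/
def lconcat (i : Fin 2) (c : Series) : Series := fun w =>
  match w with
  | [] => 0
  | j :: v => if j = i then c v else 0

/-- Right concatenation `p x_i` of the letter `x_i` onto every word of `p`. -/
def rconcat {R : Type*} [Zero R] (i : Fin 2) (p : Word → R) : Word → R := fun w =>
  if w.getLast? = some i then p w.dropLast else 0

/-- The series of a single word. -/
def ind (η : Word) : Series := fun w => if w = η then 1 else 0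

/-- The empty word as a series, the unit `∅` (often written `1`). -/
def one : Series := ind []

/-- The shuffle product, defined coefficientwise by the recursion
`⟨c ⧢ d, ∅⟩ = ⟨c,∅⟩⟨d,∅⟩` and `⟨c ⧢ d, x_i w⟩ = ⟨x_i⁻¹(c) ⧢ d, w⟩ + ⟨c ⧢ x_i⁻¹(d), w⟩`,
which is the bilinear (and ultrametrically continuous) extension of the recursive
shuffle product of words. -/
def shuffleFn : Series → Series → Word → ℝ
  | c, d, [] => c [] * d []
  | c, d, i :: w => shuffleFn (lshift i c) d w + shuffleFn c (lshift i d) w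

/-- The shuffle product on `ℝ⟨⟨X⟩⟩`. -/
def sh (c d : Series) : Series := shuffleFn c d

/-- The map `φ_d(x_i)` for the modified composition product:
`φ_d(x0)(e) = x0 e` and `φ_d(x1)(e) = x1 e + x0 (d ⧢ e)`. -/
def phiLetter (d : Series) (i : Fin 2) (e : Series) : Series :=
  if i = 0 then lconcat 0 e else lconcat 1 e + lconcat 0 (sh d e)

/-- `φ_d(η)`, the algebra-homomorphism extension determined by
`φ_d(x_i η) = φ_d(x_i) ∘ φ_d(η)` and `φ_d(∅) = id`. -/
def phi (d : Series) : Word → Series → Series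
  | [], e => e
  | i :: η, e => phiLetter d i (phi d η e)

/-- The modified composition product `c ∘̃ d = Σ_η ⟨c,η⟩ φ_d(η)(1)`. -/
def mcomp (c d : Series) : Series := fun w => ∑' η : Word, c η * phi d η one w

/-- The map `ψ_d(x_i)` for the composition product:
`ψ_d(x0)(e) = x0 e` and `ψ_d(x1)(e) = x0 (d ⧢ e)`. -/
def psiLetter (d : Series) (i : Fin 2) (e : Series) : Series :=
  if i = 0 then lconcat 0 e else lconcat 0 (sh d e)

/-- `ψ_d(η)`, determined by `ψ_d(x_i η) = ψ_d(x_i) ∘ ψ_d(η)` and `ψ_d(∅) = id`. -/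
def psi (d : Series) : Word → Series → Series
  | [], e => e
  | i :: η, e => psiLetter d i (psi d η e)

/-- The composition product `c ∘ d = Σ_η ⟨c,η⟩ ψ_d(η)(1)`. -/
def comp (c d : Series) : Series := fun w => ∑' η : Word, c η * psi d η one w

/-- The group operation on `ℝ⟨⟨X_δ⟩⟩ = {δ + c}`, transported to the `c`-parts:
`c_δ ∘ d_δ = δ + (d + c ∘̃ d)`. -/
def gop (c d : Series) : Series := d + mcomp c d

/-- The Ferfera series `c = Σ_{k ≥ 0} k! x1^k`. -/
def ferfera : Series := fun w =>
  if w = List.replicate w.length (1 : Fin 2) then (Nat.factorial w.length : ℝ) else 0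

/-- The degree of a word, `deg(η) = 2|η|_{x0} + |η|_{x1} + 1`. -/
def degW (η : Word) : ℕ := 2 * η.count 0 + η.count 1 + 1

/-- The output feedback Hopf algebra `H`: the free unital commutative `ℝ`-algebra on the
coordinate functions `a_η`, realized as polynomials in commuting variables indexed by words. -/
abbrev H : Type := MvPolynomial Word ℝ

/-- The coordinate function `a_η`. -/
def aw (η : Word) : H := MvPolynomial.X η

/-- Character (pointwise) evaluation of elements of `H` at a series `c`:
`(a_{η₁} ⋯ a_{η_l})(c) = ⟨c,η₁⟩ ⋯ ⟨c,η_l⟩`, extended as an algebra map. -/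
def evalS (c : Series) : H →ₐ[ℝ] ℝ := MvPolynomial.aeval c

/-- Evaluation of `H ⊗ H` at a pair of series: `(p ⊗ q)(c,d) = p(c) q(d)`. -/
def evalPair (c d : Series) : H ⊗[ℝ] H →ₗ[ℝ] ℝ :=
  (LinearMap.mul' ℝ ℝ).comp (TensorProduct.map (evalS c).toLinearMap (evalS d).toLinearMap)

/-- The counit `ε` of `H`: `ε(a_η) = 0`, `ε(1) = 1`. -/
def counit : H →ₐ[ℝ] ℝ := evalS 0

/-- The defining property of the full coproduct `Δ` of the output feedback Hopf algebra:
`Δ a_η = Δ̃ a_η + 1 ⊗ a_η` where `Δ̃ a_η (c,d) = ⟨c ∘̃ d, η⟩`, i.e.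
`(Δ a_η)(c,d) = ⟨c ∘̃ d, η⟩ + ⟨d, η⟩` for all series `c, d`; `Δ` is an algebra morphism. -/
def IsFBCoproduct (Δ : H →ₐ[ℝ] (H ⊗[ℝ] H)) : Prop :=
  ∀ (η : Word) (c d : Series), evalPair c d (Δ (aw η)) = mcomp c d η + d η

/-- `S` is an antipode for the coproduct `Δ` (with counit `ε`):
`μ ∘ (S ⊗ id) ∘ Δ = 1·ε = μ ∘ (id ⊗ S) ∘ Δ`. -/
def IsAntipode (Δ : H →ₐ[ℝ] (H ⊗[ℝ] H)) (S : H →ₗ[ℝ] H) : Prop :=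
  (∀ p : H, LinearMap.mul' ℝ H (TensorProduct.map S LinearMap.id (Δ p)) = counit p • 1) ∧
  (∀ p : H, LinearMap.mul' ℝ H (TensorProduct.map LinearMap.id S (Δ p)) = counit p • 1)

/-- The right-augmentation operator `θ̃_i`, the derivation on `H` with `θ̃_i(a_η) = a_{η x_i}`. -/
def thetaR (i : Fin 2) : Derivation ℝ H H :=
  MvPolynomial.mkDerivation ℝ fun η => aw (η ++ [i])

/-- The left-augmentation operator `θ_i`, the derivation on `H` with `θ_i(a_η) = a_{x_i η}`. -/
def thetaL (i : Fin 2) : Derivation ℝ H H :=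
  MvPolynomial.mkDerivation ℝ fun η => aw (i :: η)

/-- The multiplication operator `κ_∅(h) = h · a_∅`. -/
def kappaE : H →ₗ[ℝ] H := LinearMap.mulRight ℝ (aw [])

/-- The shuffle coefficient `⟨ξ ⧢ ν, η⟩`. -/
def shCoeff (ξ ν η : Word) : ℝ := sh (ind ξ) (ind ν) η

/-- The finite set of words of length `n`. -/
def wordsLen (n : ℕ) : Finset Word :=
  (Finset.univ : Finset (Fin n → Fin 2)).image List.ofFn

/-- The deshuffle coproduct `Δ_⧢ a_η = Σ_{ξ,ν} ⟨ξ ⧢ ν, η⟩ a_ξ ⊗ a_ν`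
(the unique coproduct satisfying `Δ_⧢ a_∅ = a_∅ ⊗ a_∅` and the coderivation recursions
with respect to the augmentation operators). -/
def deshuffle (η : Word) : H ⊗[ℝ] H :=
  ∑ k ∈ Finset.range (η.length + 1), ∑ ξ ∈ wordsLen k, ∑ ν ∈ wordsLen (η.length - k),
    shCoeff ξ ν η • (aw ξ ⊗ₜ[ℝ] aw ν)

/-- Iterated integrals: `E_∅[u](t) = 1`, `E_{x_i η}[u](t) = ∫₀ᵗ u_i(s) E_η[u](s) ds`. -/
def E (u : Fin 2 → ℝ → ℝ) : Word → ℝ → ℝ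
  | [], _ => 1
  | i :: η, t => ∫ s in (0:ℝ)..t, u i s * E u η s

end Paper

namespace FBAux

open Paper

/-! ### Basic shuffle lemmas -/

lemma shuffleFn_nil (c d : Series) : shuffleFn c d [] = c [] * d [] := rfl

lemma shuffleFn_cons (c d : Series) (i : Fin 2) (w : Word) :
    shuffleFn c d (i :: w) = shuffleFn (lshift i c) d w + shuffleFn c (lshift i d) w := rfl

lemma lshift_add (i : Fin 2) (c d : Series) : lshift i (c + d) = lshift i c + lshift i d := rfl

lemma lshift_zero (i : Fin 2) : lshift i (0 : Series) = 0 := rfl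

lemma sh_add_right : ∀ (w : Word) (c d e : Series),
    shuffleFn c (d + e) w = shuffleFn c d w + shuffleFn c e w
  | [], c, d, e => by simp [shuffleFn]; ring
  | i :: w, c, d, e => by
    simp only [shuffleFn]
    rw [show lshift i (d + e) = lshift i d + lshift i e from rfl,
      sh_add_right w, sh_add_right w]
    ring

lemma sh_add_left : ∀ (w : Word) (c d e : Series),
    shuffleFn (c + d) e w = shuffleFn c e w + shuffleFn d e w
  | [], c, d, e => by simp [shuffleFn]; ring
  | i :: w, c, d, e => by
    simp only [shuffleFn]
    rw [show lshift i (c + d) = lshift i c + lshift i d from rfl,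
      sh_add_left w, sh_add_left w]
    ring

lemma sh_zero_right : ∀ (w : Word) (c : Series), shuffleFn c (0 : Series) w = 0
  | [], c => by simp [shuffleFn]
  | i :: w, c => by
    simp only [shuffleFn]
    rw [show lshift i (0 : Series) = 0 from rfl, sh_zero_right w, sh_zero_right w]
    ring

lemma sh_smul_right : ∀ (w : Word) (c g : Series) (r : ℝ),
    shuffleFn c (fun u => r * g u) w = r * shuffleFn c g w
  | [], c, g, r => by simp [shuffleFn]; ring
  | i :: w, c, g, r => by
    simp only [shuffleFn]
    rw [show lshift i (fun u => r * g u) = fun u => r * lshift i g u from rfl,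
      sh_smul_right w, sh_smul_right w]
    ring

lemma sh_sum_right {α : Type*} (c : Series) (s : Finset α) (F : α → Series) :
    ∀ w : Word, shuffleFn c (fun u => ∑ x ∈ s, F x u) w = ∑ x ∈ s, shuffleFn c (F x) w := by
  classical
  induction s using Finset.induction_on with
  | empty => intro w; simp only [Finset.sum_empty]; exact sh_zero_right w c
  | insert _ _ hx ih =>
    intro w
    rw [Finset.sum_insert hx,
      show (fun u => ∑ x ∈ insert _ _, F x u) = _ + (fun u => ∑ x ∈ _, F x u) from
        funext fun u => Finset.sum_insert hx,
      sh_add_right, ih w]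

lemma sh_comm : ∀ (w : Word) (c d : Series), shuffleFn c d w = shuffleFn d c w
  | [], c, d => mul_comm _ _
  | i :: w, c, d => by
    simp only [shuffleFn]
    rw [sh_comm w (lshift i c) d, sh_comm w c (lshift i d)]
    ring

lemma lshift_sh (i : Fin 2) (a b : Series) :
    lshift i (shuffleFn a b) = shuffleFn (lshift i a) b + shuffleFn a (lshift i b) := rfl

lemma sh_assoc : ∀ (w : Word) (a b c : Series),
    shuffleFn (shuffleFn a b) c w = shuffleFn a (shuffleFn b c) w
  | [], a, b, c => mul_assoc _ _ _
  | i :: w, a, b, c => by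
    simp only [shuffleFn_cons]
    rw [lshift_sh, sh_add_left, lshift_sh, sh_add_right,
      sh_assoc w, sh_assoc w, sh_assoc w]
    ring

lemma sh_congr : ∀ (w : Word) (c c' d d' : Series),
    (∀ u : Word, u.length ≤ w.length → c u = c' u) →
    (∀ u : Word, u.length ≤ w.length → d u = d' u) →
    shuffleFn c d w = shuffleFn c' d' w
  | [], c, c', d, d', hc, hd => by
    simp only [shuffleFn_nil, hc [] (by simp), hd [] (by simp)]
  | i :: w, c, c', d, d', hc, hd => by
    simp only [shuffleFn_cons]
    rw [sh_congr w (lshift i c) (lshift i c') d d'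
        (fun u hu => hc (i :: u) (by simpa using Nat.succ_le_succ hu))
        (fun u hu => hd u (le_trans hu (by simp))),
      sh_congr w c c' (lshift i d) (lshift i d')
        (fun u hu => hc u (le_trans hu (by simp)))
        (fun u hu => hd (i :: u) (by simpa using Nat.succ_le_succ hu))]

lemma sh_vanish_right (w : Word) (c d : Series)
    (hd : ∀ u : Word, u.length ≤ w.length → d u = 0) : shuffleFn c d w = 0 := by
  rw [sh_congr w c c d 0 (fun _ _ => rfl) hd, sh_zero_right]

/-! ### lconcat / one / phi / psi basics -/

lemma fin2_cases (i : Fin 2) : i = 0 ∨ i = 1 :=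
  match i with | 0 => Or.inl rfl | 1 => Or.inr rfl

lemma lconcat_nil (i : Fin 2) (c : Series) : lconcat i c [] = 0 := rfl

lemma lconcat_cons (i j : Fin 2) (c : Series) (v : Word) :
    lconcat i c (j :: v) = if j = i then c v else 0 := rfl

lemma one_nil : one [] = 1 := rfl

lemma one_cons (i : Fin 2) (v : Word) : one (i :: v) = 0 := by
  simp [one, ind]

lemma phi_nil' (e f : Series) : phi e [] f = f := rfl

lemma phi_cons' (e f : Series) (i : Fin 2) (η : Word) :
    phi e (i :: η) f = phiLetter e i (phi e η f) := rfl

lemma phiLetter_zero (e g : Series) : phiLetter e 0 g = lconcat 0 g := by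
  simp [phiLetter]

lemma phiLetter_one (e g : Series) :
    phiLetter e 1 g = lconcat 1 g + lconcat 0 (sh e g) := by
  simp [phiLetter]

lemma psi_nil' (e f : Series) : psi e [] f = f := rfl

lemma psi_cons' (e f : Series) (i : Fin 2) (η : Word) :
    psi e (i :: η) f = psiLetter e i (psi e η f) := rfl

lemma psiLetter_zero (e g : Series) : psiLetter e 0 g = lconcat 0 g := by
  simp [psiLetter]

lemma psiLetter_one (e g : Series) : psiLetter e 1 g = lconcat 0 (sh e g) := by
  simp [psiLetter]

lemma phi_vanish (e f : Series) : ∀ (η : Word) (w : Word),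
    w.length < η.length → phi e η f w = 0 := by
  intro η
  induction η with
  | nil => intro w h; simp at h
  | cons i η ih =>
    intro w h
    rw [phi_cons']
    rcases fin2_cases i with rfl | rfl
    · rw [phiLetter_zero]
      cases w with
      | nil => rfl
      | cons j v =>
        rw [lconcat_cons]
        split
        · exact ih v (by simp at h ⊢; omega)
        · rfl
    · rw [phiLetter_one]
      cases w with
      | nil => show lconcat 1 (phi e η f) [] + lconcat 0 (sh e (phi e η f)) [] = 0; simp [lconcat_nil]
      | cons j v =>
        have h1 : lconcat 1 (phi e η f) (j :: v) = 0 := by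
          rw [lconcat_cons]
          split
          · exact ih v (by simp at h ⊢; omega)
          · rfl
        have h2 : lconcat 0 (sh e (phi e η f)) (j :: v) = 0 := by
          rw [lconcat_cons]
          split
          · exact sh_vanish_right v e _ (fun u hu => ih u (by simp at h ⊢; omega))
          · rfl
        show lconcat 1 (phi e η f) (j :: v) + lconcat 0 (sh e (phi e η f)) (j :: v) = 0
        rw [h1, h2, add_zero]

lemma psi_vanish (e f : Series) : ∀ (η : Word) (w : Word),
    w.length < η.length → psi e η f w = 0 := by
  intro η
  induction η with
  | nil => intro w h; simp at h
  | cons i η ih =>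
    intro w h
    rw [psi_cons']
    rcases fin2_cases i with rfl | rfl
    · rw [psiLetter_zero]
      cases w with
      | nil => rfl
      | cons j v =>
        rw [lconcat_cons]
        split
        · exact ih v (by simp at h ⊢; omega)
        · rfl
    · rw [psiLetter_one]
      cases w with
      | nil => rfl
      | cons j v =>
        rw [lconcat_cons]
        split
        · exact sh_vanish_right v e _ (fun u hu => ih u (by simp at h ⊢; omega))
        · rfl

/-! ### Finite-sum forms of mcomp / comp -/

def Wle (n : ℕ) : Finset Word := (Finset.range (n + 1)).biUnion wordsLen

lemma mem_wordsLen {ν : Word} {n : ℕ} : ν ∈ wordsLen n ↔ ν.length = n := by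
  unfold wordsLen
  simp only [Finset.mem_image, Finset.mem_univ, true_and]
  constructor
  · rintro ⟨f, rfl⟩; exact List.length_ofFn
  · intro h; subst h; exact ⟨ν.get, List.ofFn_get ν⟩

lemma mem_Wle {ν : Word} {n : ℕ} : ν ∈ Wle n ↔ ν.length ≤ n := by
  simp only [Wle, Finset.mem_biUnion, Finset.mem_range, mem_wordsLen]
  constructor
  · rintro ⟨k, hk, rfl⟩; omega
  · intro h; exact ⟨ν.length, by omega, rfl⟩

lemma Wle_mono {m n : ℕ} (h : m ≤ n) : Wle m ⊆ Wle n := by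
  intro ν hν; rw [mem_Wle] at hν ⊢; omega

lemma mcomp_eq_sum (c e : Series) (w : Word) :
    mcomp c e w = ∑ ν ∈ Wle w.length, c ν * phi e ν one w := by
  rw [show mcomp c e w = ∑' η : Word, c η * phi e η one w from rfl]
  refine tsum_eq_sum ?_
  intro ν hν
  rw [mem_Wle] at hν
  rw [phi_vanish e one ν w (by omega), mul_zero]

lemma comp_eq_sum (c e : Series) (w : Word) :
    comp c e w = ∑ ν ∈ Wle w.length, c ν * psi e ν one w := by
  rw [show comp c e w = ∑' η : Word, c η * psi e η one w from rfl]
  refine tsum_eq_sum ?_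
  intro ν hν
  rw [mem_Wle] at hν
  rw [psi_vanish e one ν w (by omega), mul_zero]

lemma Wle_zero : Wle 0 = {([] : Word)} := by
  ext ν
  simp only [mem_Wle, Finset.mem_singleton, Nat.le_zero, List.length_eq_zero_iff]

lemma Wle_succ (n : ℕ) :
    Wle (n + 1) =
      insert ([] : Word) (((Wle n).image (List.cons 0)) ∪ ((Wle n).image (List.cons 1))) := by
  ext ν
  simp only [mem_Wle, Finset.mem_insert, Finset.mem_union, Finset.mem_image]
  cases ν with
  | nil => simp
  | cons i μ =>
    simp only [List.length_cons, List.cons.injEq, mem_Wle]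
    constructor
    · intro h
      fin_cases i
      · exact Or.inr (Or.inl ⟨μ, by omega, rfl, rfl⟩)
      · exact Or.inr (Or.inr ⟨μ, by omega, rfl, rfl⟩)
    · rintro (h | ⟨a, ha, rfl, rfl⟩ | ⟨a, ha, rfl, rfl⟩)
      · exact absurd h (by simp)
      · omega
      · omega

lemma sum_Wle_succ (n : ℕ) (F : Word → ℝ) :
    ∑ ν ∈ Wle (n + 1), F ν
      = F [] + (∑ μ ∈ Wle n, F (0 :: μ)) + ∑ μ ∈ Wle n, F (1 :: μ) := by
  classical
  have hinj0 : ∀ a ∈ Wle n, ∀ b ∈ Wle n, (0 : Fin 2) :: a = 0 :: b → a = b := by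
    intro a _ b _ h; exact (List.cons.injEq _ _ _ _ ▸ h).2
  have hinj1 : ∀ a ∈ Wle n, ∀ b ∈ Wle n, (1 : Fin 2) :: a = 1 :: b → a = b := by
    intro a _ b _ h; exact (List.cons.injEq _ _ _ _ ▸ h).2
  have hdisj : Disjoint ((Wle n).image (List.cons 0)) ((Wle n).image (List.cons 1)) := by
    rw [Finset.disjoint_left]
    rintro ν hν0 hν1
    simp only [Finset.mem_image] at hν0 hν1
    obtain ⟨a, _, rfl⟩ := hν0
    obtain ⟨b, _, hb⟩ := hν1
    exact absurd (List.cons.injEq _ _ _ _ ▸ hb).1 (by decide)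
  have hnil : ([] : Word) ∉ ((Wle n).image (List.cons 0)) ∪ ((Wle n).image (List.cons 1)) := by
    simp
  rw [Wle_succ, Finset.sum_insert hnil, Finset.sum_union hdisj,
    Finset.sum_image hinj0, Finset.sum_image hinj1]
  ring

/-! ### Structure of mcomp -/

lemma mcomp_nil (c e : Series) : mcomp c e [] = c [] := by
  rw [mcomp_eq_sum]
  simp only [List.length_nil, Wle_zero, Finset.sum_singleton, phi_nil', one_nil, mul_one]

lemma mcomp_cons_one (c e : Series) (v : Word) :
    mcomp c e (1 :: v) = mcomp (lshift 1 c) e v := by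
  rw [mcomp_eq_sum, mcomp_eq_sum]
  rw [show ((1 : Fin 2) :: v).length = v.length + 1 from rfl, sum_Wle_succ]
  have h0 : ∀ μ : Word, phi e (0 :: μ) one (1 :: v) = 0 := by
    intro μ
    rw [phi_cons', phiLetter_zero, lconcat_cons, if_neg (by decide)]
  have h1 : ∀ μ : Word, phi e (1 :: μ) one (1 :: v) = phi e μ one v := by
    intro μ
    rw [phi_cons', phiLetter_one]
    show lconcat 1 (phi e μ one) (1 :: v) + lconcat 0 (sh e (phi e μ one)) (1 :: v) = _
    rw [lconcat_cons, lconcat_cons, if_pos rfl, if_neg (by decide), add_zero]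
  simp only [phi_nil', one_cons, h0, h1, mul_zero, Finset.sum_const_zero, zero_add, add_zero]
  exact Finset.sum_congr rfl (fun μ _ => rfl)

lemma mcomp_cons_zero (c e : Series) (v : Word) :
    mcomp c e (0 :: v) = mcomp (lshift 0 c) e v + shuffleFn e (mcomp (lshift 1 c) e) v := by
  rw [mcomp_eq_sum]
  rw [show ((0 : Fin 2) :: v).length = v.length + 1 from rfl, sum_Wle_succ]
  have h0 : ∀ μ : Word, phi e (0 :: μ) one (0 :: v) = phi e μ one v := by
    intro μ
    rw [phi_cons', phiLetter_zero, lconcat_cons, if_pos rfl]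
  have h1 : ∀ μ : Word, phi e (1 :: μ) one (0 :: v) = shuffleFn e (phi e μ one) v := by
    intro μ
    rw [phi_cons', phiLetter_one]
    show lconcat 1 (phi e μ one) (0 :: v) + lconcat 0 (sh e (phi e μ one)) (0 :: v) = _
    rw [lconcat_cons, lconcat_cons, if_neg (by decide), if_pos rfl, zero_add]
    rfl
  simp only [phi_nil', one_cons, mul_zero, zero_add, h0, h1]
  congr 1
  · rw [mcomp_eq_sum]
    rfl
  · -- ∑ μ ∈ Wle v.length, c (1::μ) * shuffleFn e (phi e μ one) v
    --   = shuffleFn e (mcomp (lshift 1 c) e) v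
    have hG : shuffleFn e (mcomp (lshift 1 c) e) v
        = shuffleFn e (fun u => ∑ μ ∈ Wle v.length, (lshift 1 c) μ * phi e μ one u) v := by
      refine sh_congr v e e _ _ (fun _ _ => rfl) ?_
      intro u hu
      rw [mcomp_eq_sum]
      refine Finset.sum_subset (Wle_mono hu) ?_
      intro μ _ hμ
      rw [mem_Wle] at hμ
      rw [phi_vanish e one μ u (by omega), mul_zero]
    rw [hG]
    refine Eq.trans ?_
      (sh_sum_right e (Wle v.length) (fun μ u => (lshift 1 c) μ * phi e μ one u) v).symm
    refine Finset.sum_congr rfl ?_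
    intro μ _
    exact (sh_smul_right v e (phi e μ one) (lshift 1 c μ)).symm

/-! ### Linearity of mcomp and comp in the left argument -/

lemma mcomp_add_left (c c' e : Series) : mcomp (c + c') e = mcomp c e + mcomp c' e := by
  funext w
  show mcomp (c + c') e w = mcomp c e w + mcomp c' e w
  rw [mcomp_eq_sum, mcomp_eq_sum, mcomp_eq_sum, ← Finset.sum_add_distrib]
  exact Finset.sum_congr rfl (fun ν _ => by show (c ν + c' ν) * _ = _; ring)

lemma mcomp_zero_left (e : Series) : mcomp 0 e = 0 := by
  funext w
  show mcomp 0 e w = 0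
  rw [mcomp_eq_sum]
  exact Finset.sum_eq_zero (fun ν _ => by show (0 : ℝ) * _ = 0; ring)

lemma mcomp_neg_left (c e : Series) : mcomp (-c) e = - mcomp c e := by
  funext w
  show mcomp (-c) e w = - mcomp c e w
  rw [mcomp_eq_sum, mcomp_eq_sum, ← Finset.sum_neg_distrib]
  exact Finset.sum_congr rfl (fun ν _ => by show (-(c ν)) * _ = _; ring)

lemma comp_neg_left (c e : Series) : comp (-c) e = - comp c e := by
  funext w
  show comp (-c) e w = - comp c e w
  rw [comp_eq_sum, comp_eq_sum, ← Finset.sum_neg_distrib]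
  exact Finset.sum_congr rfl (fun ν _ => by show (-(c ν)) * _ = _; ring)

/-! ### mcomp of one and of `x0`-concatenations -/

lemma mcomp_one (e : Series) : mcomp one e = one := by
  funext w
  cases w with
  | nil => rw [mcomp_nil]
  | cons i v =>
    rcases fin2_cases i with rfl | rfl
    · rw [mcomp_cons_zero]
      have h0 : lshift 0 one = 0 := by
        funext u; show one (0 :: u) = 0; exact one_cons 0 u
      have h1 : lshift 1 one = 0 := by
        funext u; show one (1 :: u) = 0; exact one_cons 1 u
      rw [h0, h1, mcomp_zero_left, sh_zero_right, one_cons]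
      show (0 : Series) v + 0 = 0
      simp
    · rw [mcomp_cons_one]
      have h1 : lshift 1 one = 0 := by
        funext u; show one (1 :: u) = 0; exact one_cons 1 u
      rw [h1, mcomp_zero_left, one_cons]
      rfl

lemma lshift_lconcat_same (i : Fin 2) (g : Series) : lshift i (lconcat i g) = g := by
  funext u
  show lconcat i g (i :: u) = g u
  rw [lconcat_cons, if_pos rfl]

lemma lshift_lconcat_ne (i j : Fin 2) (g : Series) (h : j ≠ i) :
    lshift j (lconcat i g) = 0 := by
  funext u
  show lconcat i g (j :: u) = 0
  rw [lconcat_cons, if_neg h]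

lemma mcomp_lconcat_zero (g e : Series) : mcomp (lconcat 0 g) e = lconcat 0 (mcomp g e) := by
  funext w
  cases w with
  | nil => rw [mcomp_nil]; rfl
  | cons i v =>
    rcases fin2_cases i with rfl | rfl
    · rw [mcomp_cons_zero, lshift_lconcat_same, lshift_lconcat_ne 0 1 g (by decide),
        mcomp_zero_left, sh_zero_right, add_zero, lconcat_cons, if_pos rfl]
    · rw [mcomp_cons_one, lshift_lconcat_ne 0 1 g (by decide), mcomp_zero_left,
        lconcat_cons, if_neg (by decide)]
      rfl

/-! ### mcomp is a shuffle algebra homomorphism in the left argument -/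

lemma lshift_one_mcomp (a e : Series) : lshift 1 (mcomp a e) = mcomp (lshift 1 a) e := by
  funext u; exact mcomp_cons_one a e u

lemma lshift_zero_mcomp (a e : Series) :
    lshift 0 (mcomp a e) = mcomp (lshift 0 a) e + shuffleFn e (mcomp (lshift 1 a) e) := by
  funext u; exact mcomp_cons_zero a e u

lemma sh_comm' (c d : Series) : shuffleFn c d = shuffleFn d c :=
  funext fun w => sh_comm w c d

lemma mcomp_sh_aux (e : Series) : ∀ n : ℕ, ∀ w : Word, w.length ≤ n → ∀ a b : Series,
    mcomp (shuffleFn a b) e w = shuffleFn (mcomp a e) (mcomp b e) w := by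
  intro n
  induction n with
  | zero =>
    intro w hw a b
    have : w = [] := List.length_eq_zero_iff.mp (by omega)
    subst this
    rw [mcomp_nil, shuffleFn_nil, shuffleFn_nil, mcomp_nil, mcomp_nil]
  | succ n ih =>
    intro w hw a b
    cases w with
    | nil => rw [mcomp_nil, shuffleFn_nil, shuffleFn_nil, mcomp_nil, mcomp_nil]
    | cons i v =>
      have hv : v.length ≤ n := by simp at hw; omega
      rcases fin2_cases i with rfl | rfl
      · -- i = 0
        rw [mcomp_cons_zero, shuffleFn_cons, lshift_zero_mcomp, lshift_zero_mcomp,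
          sh_add_left, sh_add_right]
        rw [show lshift 0 (shuffleFn a b) = shuffleFn (lshift 0 a) b + shuffleFn a (lshift 0 b)
            from rfl,
          show lshift 1 (shuffleFn a b) = shuffleFn (lshift 1 a) b + shuffleFn a (lshift 1 b)
            from rfl,
          mcomp_add_left, mcomp_add_left]
        have hcongr : shuffleFn e
              (mcomp (shuffleFn (lshift 1 a) b) e + mcomp (shuffleFn a (lshift 1 b)) e) v
            = shuffleFn e
              (shuffleFn (mcomp (lshift 1 a) e) (mcomp b e)
                + shuffleFn (mcomp a e) (mcomp (lshift 1 b) e)) v := by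
          refine sh_congr v e e _ _ (fun _ _ => rfl) ?_
          intro u hu
          show mcomp (shuffleFn (lshift 1 a) b) e u + mcomp (shuffleFn a (lshift 1 b)) e u
              = shuffleFn (mcomp (lshift 1 a) e) (mcomp b e) u
                + shuffleFn (mcomp a e) (mcomp (lshift 1 b) e) u
          rw [ih u (by omega) (lshift 1 a) b, ih u (by omega) a (lshift 1 b)]
        rw [show (mcomp (shuffleFn (lshift 0 a) b) e + mcomp (shuffleFn a (lshift 0 b)) e) v
            = mcomp (shuffleFn (lshift 0 a) b) e v + mcomp (shuffleFn a (lshift 0 b)) e v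
            from rfl,
          ih v hv (lshift 0 a) b, ih v hv a (lshift 0 b), hcongr, sh_add_right]
        -- now pure shuffle algebra
        have assoc1 : shuffleFn e (shuffleFn (mcomp (lshift 1 a) e) (mcomp b e)) v
            = shuffleFn (shuffleFn e (mcomp (lshift 1 a) e)) (mcomp b e) v :=
          (sh_assoc v e (mcomp (lshift 1 a) e) (mcomp b e)).symm
        have assoc2 : shuffleFn e (shuffleFn (mcomp a e) (mcomp (lshift 1 b) e)) v
            = shuffleFn (mcomp a e) (shuffleFn e (mcomp (lshift 1 b) e)) v := by
          rw [← sh_assoc v e (mcomp a e) (mcomp (lshift 1 b) e),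
            sh_comm' e (mcomp a e), sh_assoc]
        rw [assoc1, assoc2]
        ring
      · -- i = 1
        rw [mcomp_cons_one, shuffleFn_cons, lshift_one_mcomp, lshift_one_mcomp,
          show lshift 1 (shuffleFn a b) = shuffleFn (lshift 1 a) b + shuffleFn a (lshift 1 b)
            from rfl,
          mcomp_add_left]
        rw [show (mcomp (shuffleFn (lshift 1 a) b) e + mcomp (shuffleFn a (lshift 1 b)) e) v
            = mcomp (shuffleFn (lshift 1 a) b) e v + mcomp (shuffleFn a (lshift 1 b)) e v
            from rfl,
          ih v hv (lshift 1 a) b, ih v hv a (lshift 1 b)]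

lemma mcomp_sh (a b e : Series) :
    mcomp (shuffleFn a b) e = shuffleFn (mcomp a e) (mcomp b e) :=
  funext fun w => mcomp_sh_aux e w.length w le_rfl a b

/-! ### The key mixing identity -/

lemma psi_mcomp (c e f : Series) : ∀ η : Word,
    psi (mcomp c e) η (mcomp f e) = mcomp (psi c η f) e := by
  intro η
  induction η with
  | nil => rfl
  | cons i η ih =>
    rw [psi_cons', psi_cons', ih]
    set g := psi c η f with hg
    rcases fin2_cases i with rfl | rfl
    · rw [psiLetter_zero, psiLetter_zero, mcomp_lconcat_zero]
    · rw [psiLetter_one, psiLetter_one]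
      show lconcat 0 (sh (mcomp c e) (mcomp g e)) = mcomp (lconcat 0 (sh c g)) e
      rw [show sh (mcomp c e) (mcomp g e) = shuffleFn (mcomp c e) (mcomp g e) from rfl,
        ← mcomp_sh, mcomp_lconcat_zero]
      rfl

lemma mixing (d c e : Series) : comp d (mcomp c e) = mcomp (comp d c) e := by
  funext w
  rw [comp_eq_sum, mcomp_eq_sum]
  have step1 : ∀ ν ∈ Wle w.length,
      (comp d c) ν * phi e ν one w
        = ∑ η ∈ Wle w.length, d η * psi c η one ν * phi e ν one w := by
    intro ν hν
    rw [comp_eq_sum, Finset.sum_mul]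
    refine Finset.sum_subset (Wle_mono (mem_Wle.mp hν)) ?_
    intro η _ hη
    rw [mem_Wle] at hη
    rw [psi_vanish c one η ν (by omega)]
    ring
  rw [Finset.sum_congr rfl step1, Finset.sum_comm]
  refine Finset.sum_congr rfl ?_
  intro η _
  have : psi (mcomp c e) η one = mcomp (psi c η one) e := by
    have := psi_mcomp c e one η
    rwa [mcomp_one] at this
  rw [this, mcomp_eq_sum]
  rw [Finset.mul_sum]
  exact Finset.sum_congr rfl (fun ν _ => by ring)

/-! ### Uniqueness of fixed points of `w ↦ a ∘̃ w` -/

lemma phi_congr (w₁ w₂ f : Series) : ∀ (η : Word) (u : Word),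
    (∀ v : Word, v.length < u.length → w₁ v = w₂ v) →
    phi w₁ η f u = phi w₂ η f u := by
  intro η
  induction η with
  | nil => intro u _; rfl
  | cons i η ih =>
    intro u hu
    rw [phi_cons', phi_cons']
    rcases fin2_cases i with rfl | rfl
    · rw [phiLetter_zero, phiLetter_zero]
      cases u with
      | nil => rfl
      | cons j v =>
        rw [lconcat_cons, lconcat_cons]
        split
        · exact ih v (fun x hx => hu x (by simp; omega))
        · rfl
    · rw [phiLetter_one, phiLetter_one]
      cases u with
      | nil => rfl
      | cons j v =>
        show lconcat 1 (phi w₁ η f) (j :: v) + lconcat 0 (sh w₁ (phi w₁ η f)) (j :: v)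
            = lconcat 1 (phi w₂ η f) (j :: v) + lconcat 0 (sh w₂ (phi w₂ η f)) (j :: v)
        rw [lconcat_cons, lconcat_cons, lconcat_cons, lconcat_cons]
        congr 1
        · split
          · exact ih v (fun x hx => hu x (by simp; omega))
          · rfl
        · split
          · refine sh_congr v w₁ w₂ _ _ ?_ ?_
            · intro x hx; exact hu x (by simp; omega)
            · intro x hx; exact ih x (fun y hy => hu y (by simp; omega))
          · rfl

lemma fixed_unique (a w₁ w₂ : Series)
    (h₁ : w₁ = mcomp a w₁) (h₂ : w₂ = mcomp a w₂) : w₁ = w₂ := by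
  have key : ∀ n : ℕ, ∀ u : Word, u.length ≤ n → w₁ u = w₂ u := by
    intro n
    induction n using Nat.strong_induction_on with
    | _ n ihn =>
      intro u hu
      conv_lhs => rw [h₁]
      conv_rhs => rw [h₂]
      rw [mcomp_eq_sum, mcomp_eq_sum]
      refine Finset.sum_congr rfl ?_
      intro ν _
      congr 1
      refine phi_congr w₁ w₂ one ν u ?_
      intro v hv
      exact ihn v.length (by omega) v le_rfl
  funext u
  exact key u.length u le_rfl

lemma gop_def (a b : Series) : gop a b = b + mcomp a b := rfl

end FBAux


open Paper in
/-- For any `c, d ∈ ℝ⟨⟨X⟩⟩`, the series `e := c ∘̃ ((−d) ∘ c)^{∘−1}`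
satisfies the feedback fixed point equation `e = c ∘̃ (d ∘ e)`; that is, the feedback
product `c @ d`, characterized as the unique solution of that fixed point equation,
equals `c ∘̃ ((−d) ∘ c)^{∘−1}`.  Here `i` denotes `((−d) ∘ c)^{∘−1}`, the group inverse
of `(−d) ∘ c` in the output feedback group. -/
theorem feedback_product_formula (c d i : Series)
    (hinv : gop (comp (-d) c) i = 0 ∧ gop i (comp (-d) c) = 0) :
    mcomp c i = mcomp c (comp d (mcomp c i)) ∧
    (∀ e : Series, e = mcomp c (comp d e) → e = mcomp c i) := by
  obtain ⟨h1, -⟩ := hinv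
  simp only [FBAux.gop_def] at h1
  rw [FBAux.comp_neg_left, FBAux.mcomp_neg_left] at h1
  have hfix_i : i = mcomp (comp d c) i := by
    have h2 : i - mcomp (comp d c) i = 0 := by rwa [sub_eq_add_neg]
    exact sub_eq_zero.mp h2
  have hmix : comp d (mcomp c i) = i := by
    rw [FBAux.mixing d c i]; exact hfix_i.symm
  constructor
  · conv_rhs => rw [hmix]
  · intro e he
    have hw : comp d e = mcomp (comp d c) (comp d e) := by
      conv_lhs => rw [he]
      exact FBAux.mixing d c (comp d e)
    have hei : comp d e = i := FBAux.fixed_unique (comp d c) (comp d e) i hw hfix_i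
    rw [he, hei]
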